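/- arXiv:2206.09945 — 2 statements merged into one kernel-verified Lean document; each statement's English description precedes it below -/
import Mathlib

section
/- For every K ∈ ℝ^{(n−p)×p}, let D ∈ F^{p×p} be the diagonal matrix whose i-th diagonal entry is W_{ii}. Then λI_p − D is invertible over F; the matrix Φ := (λI_p − D)^{-1}·(W − D) has all diagonal entries equal to 0; I_p − Φ is invertible over F; and with Γ := (λI_p − D)^{-1}·V one has (I_p − Φ)·G = Γ, i.e. G = (I_p − Φ)^{-1}·Γ, so (Φ, Γ) is an NRF pair of G. -/
open Matrix Polynomial

set_option synthInstance.maxHeartbeats 1000000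
set_option maxHeartbeats 1000000

noncomputable section

/-- The field of real rational functions. -/
abbrev FF : Type := RatFunc ℝ

/-- The rational function `λ` (the image of the polynomial indeterminate `X`). -/
noncomputable def lam : FF := RatFunc.X

/-- Entrywise embedding of a real matrix into matrices over `FF`. -/
noncomputable def mapF {k l : Type} (M : Matrix k l ℝ) : Matrix k l FF :=
  M.map (algebraMap ℝ FF)

/-- The pencil `λ I - M` over `FF`, for a real square matrix `M`. -/
noncomputable def lamI {k : Type} [Fintype k] [DecidableEq k] (M : Matrix k k ℝ) :
    Matrix k k FF := lam • (1 : Matrix k k FF) - mapF M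

/-- Entrywise complexification of a real matrix. -/
def mapC {k l : Type} (M : Matrix k l ℝ) : Matrix k l ℂ :=
  M.map (algebraMap ℝ ℂ)

/-- A real rational function is stable if every complex root of its reduced denominator
has real part `< 0`. -/
def StableF (f : RatFunc ℝ) : Prop :=
  ∀ z : ℂ, ((f.denom).map (algebraMap ℝ ℂ)).IsRoot z → z.re < 0

/-- A real square matrix is Hurwitz if all roots of its characteristic polynomial
have real part `< 0`. -/
def IsHurwitz {k : Type} [Fintype k] [DecidableEq k] (M : Matrix k k ℝ) : Prop :=
  ∀ z : ℂ, ((M.charpoly).map (algebraMap ℝ ℂ)).IsRoot z → z.re < 0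

/-- `A_K := K A11 - K A12 K + A21 - A22 K`. -/
noncomputable def AKmat {p r : ℕ} (A11 : Matrix (Fin p) (Fin p) ℝ)
    (A12 : Matrix (Fin p) (Fin r) ℝ) (A21 : Matrix (Fin r) (Fin p) ℝ)
    (A22 : Matrix (Fin r) (Fin r) ℝ) (K : Matrix (Fin r) (Fin p) ℝ) :
    Matrix (Fin r) (Fin p) ℝ :=
  K * A11 - K * A12 * K + A21 - A22 * K

/-- The `W` member of the SRTR pair obtained from `K`. -/
noncomputable def srtrW {p r : ℕ} (A11 : Matrix (Fin p) (Fin p) ℝ)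
    (A12 : Matrix (Fin p) (Fin r) ℝ) (A21 : Matrix (Fin r) (Fin p) ℝ)
    (A22 : Matrix (Fin r) (Fin r) ℝ) (K : Matrix (Fin r) (Fin p) ℝ) :
    Matrix (Fin p) (Fin p) FF :=
  mapF (A11 - A12 * K) +
    mapF A12 * (lamI (A22 + K * A12))⁻¹ * mapF (AKmat A11 A12 A21 A22 K)

/-- The `V` member of the SRTR pair obtained from `K`. -/
noncomputable def srtrV {p r m : ℕ} (A12 : Matrix (Fin p) (Fin r) ℝ)
    (A22 : Matrix (Fin r) (Fin r) ℝ) (B1 : Matrix (Fin p) (Fin m) ℝ)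
    (B2 : Matrix (Fin r) (Fin m) ℝ) (K : Matrix (Fin r) (Fin p) ℝ) :
    Matrix (Fin p) (Fin m) FF :=
  mapF B1 + mapF A12 * (lamI (A22 + K * A12))⁻¹ * mapF (K * B1 + B2)

/-- The plant transfer function `G = [I_p 0] (λ I_n - A)⁻¹ B`. -/
noncomputable def plantG {p r m : ℕ} (A11 : Matrix (Fin p) (Fin p) ℝ)
    (A12 : Matrix (Fin p) (Fin r) ℝ) (A21 : Matrix (Fin r) (Fin p) ℝ)
    (A22 : Matrix (Fin r) (Fin r) ℝ) (B1 : Matrix (Fin p) (Fin m) ℝ)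
    (B2 : Matrix (Fin r) (Fin m) ℝ) : Matrix (Fin p) (Fin m) FF :=
  fromCols (1 : Matrix (Fin p) (Fin p) FF) (0 : Matrix (Fin p) (Fin r) FF) *
    (lamI (fromBlocks A11 A12 A21 A22))⁻¹ * mapF (fromRows B1 B2)

/-- `(A12, A22)` is observable: `[A22 - μ I ; A12]` has full column rank for all `μ : ℂ`. -/
def ObsPair {p r : ℕ} (A12 : Matrix (Fin p) (Fin r) ℝ)
    (A22 : Matrix (Fin r) (Fin r) ℝ) : Prop :=
  ∀ μ : ℂ, (fromRows (mapC A22 - μ • (1 : Matrix (Fin r) (Fin r) ℂ)) (mapC A12)).rank = r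

/-- `(A, B)` is controllable: `[A - μ I, B]` has full row rank for all `μ : ℂ`. -/
def CtrbPair {p r m : ℕ} (A : Matrix (Fin p ⊕ Fin r) (Fin p ⊕ Fin r) ℝ)
    (B : Matrix (Fin p ⊕ Fin r) (Fin m) ℝ) : Prop :=
  ∀ μ : ℂ, (fromCols (mapC A - μ • (1 : Matrix (Fin p ⊕ Fin r) (Fin p ⊕ Fin r) ℂ))
    (mapC B)).rank = p + r

-- Auxiliary lemmas

lemma mapF_mul {k l o : Type} [Fintype l] (M : Matrix k l ℝ) (N : Matrix l o ℝ) :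
    mapF (M * N) = mapF M * mapF N := Matrix.map_mul

lemma mapF_add {k l : Type} (M N : Matrix k l ℝ) : mapF (M + N) = mapF M + mapF N :=
  Matrix.map_add _ (by simp) M N

lemma mapF_sub {k l : Type} (M N : Matrix k l ℝ) : mapF (M - N) = mapF M - mapF N :=
  Matrix.map_sub _ (by simp) M N

lemma mapF_fromBlocks {k l o q : Type} (P : Matrix k o ℝ) (Q : Matrix k q ℝ)
    (R : Matrix l o ℝ) (S : Matrix l q ℝ) :
    mapF (fromBlocks P Q R S) = fromBlocks (mapF P) (mapF Q) (mapF R) (mapF S) :=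
  Matrix.fromBlocks_map _ _ _ _ _

lemma mapF_fromRows {k l o : Type} (P : Matrix k o ℝ) (Q : Matrix l o ℝ) :
    mapF (fromRows P Q) = fromRows (mapF P) (mapF Q) := by
  ext i j; cases i <;> rfl

lemma lamI_eq {k : Type} [Fintype k] [DecidableEq k] (M : Matrix k k ℝ) :
    lamI M = (charmatrix M).map (algebraMap ℝ[X] FF) := by
  ext i j
  by_cases h : i = j
  · subst h
    simp [lamI, mapF, charmatrix_apply_eq, lam, RatFunc.algebraMap_C, RatFunc.algebraMap_X,
      Matrix.one_apply, RatFunc.algebraMap_eq_C]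
  · simp [lamI, mapF, charmatrix_apply_ne _ _ _ h, Matrix.one_apply, h, lam,
      RatFunc.algebraMap_C, RatFunc.algebraMap_eq_C]

lemma det_lamI_ne_zero {k : Type} [Fintype k] [DecidableEq k] (M : Matrix k k ℝ) :
    (lamI M).det ≠ 0 := by
  rw [lamI_eq, ← RingHom.mapMatrix_apply, ← RingHom.map_det]
  exact RatFunc.algebraMap_ne_zero (M.charpoly_monic.ne_zero)

lemma isUnit_lamI {k : Type} [Fintype k] [DecidableEq k] (M : Matrix k k ℝ) :
    IsUnit (lamI M) :=
  (Matrix.isUnit_iff_isUnit_det _).mpr (isUnit_iff_ne_zero.mpr (det_lamI_ne_zero M))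

lemma lamI_fromBlocks {k l : Type} [Fintype k] [DecidableEq k] [Fintype l] [DecidableEq l]
    (P : Matrix k k ℝ) (Q : Matrix k l ℝ) (R : Matrix l k ℝ) (S : Matrix l l ℝ) :
    lamI (fromBlocks P Q R S) = fromBlocks (lamI P) (-(mapF Q)) (-(mapF R)) (lamI S) := by
  unfold lamI
  rw [mapF_fromBlocks, ← fromBlocks_one, fromBlocks_smul]
  ext i j
  cases i <;> cases j <;>
    simp [fromBlocks_apply₁₁, fromBlocks_apply₁₂, fromBlocks_apply₂₁, fromBlocks_apply₂₂]

lemma det_schur_ne_zero {k l : Type} [Fintype k] [DecidableEq k] [Fintype l] [DecidableEq l]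
    (P : Matrix k k ℝ) (Q : Matrix k l ℝ) (R : Matrix l k ℝ) (S : Matrix l l ℝ) :
    (lamI P - mapF Q * (lamI S)⁻¹ * mapF R).det ≠ 0 := by
  haveI : Invertible (lamI S) := (isUnit_lamI S).invertible
  have h := Matrix.det_fromBlocks₂₂ (lamI P) (-(mapF Q)) (-(mapF R)) (lamI S)
  rw [← lamI_fromBlocks, invOf_eq_nonsing_inv] at h
  have h2 : lamI P - -mapF Q * (lamI S)⁻¹ * -mapF R
      = lamI P - mapF Q * (lamI S)⁻¹ * mapF R := by
    simp [Matrix.neg_mul, Matrix.mul_neg]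
  rw [h2] at h
  intro h0
  exact det_lamI_ne_zero (fromBlocks P Q R S) (by rw [h, h0, mul_zero])

lemma lam_sub_W_ne_zero {p r : ℕ} (A11 : Matrix (Fin p) (Fin p) ℝ)
    (A12 : Matrix (Fin p) (Fin r) ℝ) (A21 : Matrix (Fin r) (Fin p) ℝ)
    (A22 : Matrix (Fin r) (Fin r) ℝ) (K : Matrix (Fin r) (Fin p) ℝ) (i : Fin p) :
    lam - srtrW A11 A12 A21 A22 K i i ≠ 0 := by
  set c := A11 - A12 * K with hc
  set AK := AKmat A11 A12 A21 A22 K with hAK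
  set S := A22 + K * A12 with hS
  have h := det_schur_ne_zero (Matrix.of fun (_ _ : Fin 1) => c i i)
    (Matrix.of fun (_ : Fin 1) j => A12 i j) (Matrix.of fun j (_ : Fin 1) => AK j i) S
  rw [Matrix.det_fin_one] at h
  have he : (lamI (Matrix.of fun (_ _ : Fin 1) => c i i) -
      mapF (Matrix.of fun (_ : Fin 1) j => A12 i j) * (lamI S)⁻¹ *
        mapF (Matrix.of fun j (_ : Fin 1) => AK j i)) 0 0
      = lam - srtrW A11 A12 A21 A22 K i i := by
    simp only [srtrW, ← hc, ← hAK, ← hS, lamI, mapF, Matrix.sub_apply, Matrix.add_apply,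
      Matrix.smul_apply, Matrix.one_apply_eq, Matrix.map_apply, Matrix.mul_apply,
      Matrix.of_apply, smul_eq_mul, mul_one]
    ring_nf
  rw [he] at h
  exact h

lemma comm_TL {p r : ℕ} (A11 : Matrix (Fin p) (Fin p) ℝ)
    (A12 : Matrix (Fin p) (Fin r) ℝ) (A21 : Matrix (Fin r) (Fin p) ℝ)
    (A22 : Matrix (Fin r) (Fin r) ℝ) (K : Matrix (Fin r) (Fin p) ℝ) :
    (fromBlocks 1 0 (mapF K) 1) * lamI (fromBlocks A11 A12 A21 A22) =
      lamI (fromBlocks (A11 - A12 * K) A12 (AKmat A11 A12 A21 A22 K) (A22 + K * A12)) *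
        (fromBlocks 1 0 (mapF K) 1) := by
  rw [lamI_fromBlocks, lamI_fromBlocks, fromBlocks_multiply, fromBlocks_multiply]
  rw [fromBlocks_inj]
  refine ⟨?_, ?_, ?_, ?_⟩ <;>
    · simp only [lamI, AKmat, mapF_sub, mapF_add, mapF_mul, Matrix.one_mul, Matrix.mul_one,
        Matrix.zero_mul, Matrix.mul_zero, Matrix.neg_mul, Matrix.mul_neg, Matrix.smul_mul,
        Matrix.mul_smul, Matrix.sub_mul, Matrix.mul_sub, Matrix.add_mul, Matrix.mul_add,
        add_zero, zero_add, smul_zero, neg_zero]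
      try abel

lemma isUnit_lam_one_sub_W {p r : ℕ} (A11 : Matrix (Fin p) (Fin p) ℝ)
    (A12 : Matrix (Fin p) (Fin r) ℝ) (A21 : Matrix (Fin r) (Fin p) ℝ)
    (A22 : Matrix (Fin r) (Fin r) ℝ) (K : Matrix (Fin r) (Fin p) ℝ) :
    IsUnit (lam • (1 : Matrix (Fin p) (Fin p) FF) - srtrW A11 A12 A21 A22 K) := by
  have h : lam • (1 : Matrix (Fin p) (Fin p) FF) - srtrW A11 A12 A21 A22 K =
      lamI (A11 - A12 * K) - mapF A12 * (lamI (A22 + K * A12))⁻¹ *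
        mapF (AKmat A11 A12 A21 A22 K) := by
    simp only [srtrW, lamI]; abel
  rw [h, Matrix.isUnit_iff_isUnit_det]
  exact isUnit_iff_ne_zero.mpr (det_schur_ne_zero _ _ _ _)

set_option maxHeartbeats 4000000 in
lemma key_identity {p r m : ℕ} (A11 : Matrix (Fin p) (Fin p) ℝ)
    (A12 : Matrix (Fin p) (Fin r) ℝ) (A21 : Matrix (Fin r) (Fin p) ℝ)
    (A22 : Matrix (Fin r) (Fin r) ℝ) (B1 : Matrix (Fin p) (Fin m) ℝ)
    (B2 : Matrix (Fin r) (Fin m) ℝ) (K : Matrix (Fin r) (Fin p) ℝ) :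
    (lam • (1 : Matrix (Fin p) (Fin p) FF) - srtrW A11 A12 A21 A22 K) *
      plantG A11 A12 A21 A22 B1 B2 = srtrV A12 A22 B1 B2 K := by
  haveI iDb : Invertible (lamI (A22 + K * A12)) := (isUnit_lamI _).invertible
  have hSc : lamI (A11 - A12 * K) - (-(mapF A12)) * ⅟(lamI (A22 + K * A12)) *
      (-(mapF (AKmat A11 A12 A21 A22 K))) =
      lam • (1 : Matrix (Fin p) (Fin p) FF) - srtrW A11 A12 A21 A22 K := by
    rw [invOf_eq_nonsing_inv]
    simp only [srtrW, lamI, Matrix.neg_mul, Matrix.mul_neg, neg_neg]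
    abel
  haveI iSc : Invertible (lamI (A11 - A12 * K) - (-(mapF A12)) * ⅟(lamI (A22 + K * A12)) *
      (-(mapF (AKmat A11 A12 A21 A22 K)))) :=
    (hSc ▸ (isUnit_lam_one_sub_W A11 A12 A21 A22 K)).invertible
  haveI iL : Invertible (fromBlocks (lamI (A11 - A12 * K)) (-(mapF A12))
      (-(mapF (AKmat A11 A12 A21 A22 K))) (lamI (A22 + K * A12))) :=
    Matrix.fromBlocks₂₂Invertible _ _ _ _
  have hTTi : (fromBlocks 1 0 (mapF K) 1 : Matrix (Fin p ⊕ Fin r) (Fin p ⊕ Fin r) FF) *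
      fromBlocks 1 0 (-(mapF K)) 1 = 1 := by
    rw [fromBlocks_multiply]
    simpa using fromBlocks_one
  have hTiT : (fromBlocks 1 0 (-(mapF K)) 1 : Matrix (Fin p ⊕ Fin r) (Fin p ⊕ Fin r) FF) *
      fromBlocks 1 0 (mapF K) 1 = 1 := by
    rw [fromBlocks_multiply]
    simpa using fromBlocks_one
  have hLinv : (lamI (fromBlocks A11 A12 A21 A22))⁻¹ =
      fromBlocks 1 0 (-(mapF K)) 1 *
        ⅟(fromBlocks (lamI (A11 - A12 * K)) (-(mapF A12))
          (-(mapF (AKmat A11 A12 A21 A22 K))) (lamI (A22 + K * A12))) *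
        fromBlocks 1 0 (mapF K) 1 := by
    apply Matrix.inv_eq_right_inv
    have hA : lamI (fromBlocks A11 A12 A21 A22) =
        fromBlocks 1 0 (-(mapF K)) 1 *
          (lamI (fromBlocks (A11 - A12 * K) A12 (AKmat A11 A12 A21 A22 K) (A22 + K * A12)) *
            fromBlocks 1 0 (mapF K) 1) := by
      rw [← comm_TL, ← mul_assoc, hTiT, one_mul]
    rw [hA, lamI_fromBlocks]
    simp only [mul_assoc]
    rw [← mul_assoc (fromBlocks 1 0 (mapF K) 1) (fromBlocks 1 0 (-(mapF K)) 1), hTTi, one_mul,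
      ← mul_assoc (fromBlocks (lamI (A11 - A12 * K)) _ _ _), mul_invOf_self, one_mul, hTiT]
  unfold plantG
  rw [hLinv, Matrix.invOf_fromBlocks₂₂_eq, mapF_fromRows]
  simp only [Matrix.mul_assoc]
  rw [fromBlocks_mul_fromRows]
  rw [← Matrix.mul_assoc (fromCols 1 0) (fromBlocks 1 0 (-(mapF K)) 1),
    fromCols_mul_fromBlocks]
  simp only [Matrix.one_mul, Matrix.zero_mul, Matrix.mul_zero, Matrix.mul_one, add_zero, zero_add]
  rw [← Matrix.mul_assoc (fromCols 1 0), fromCols_mul_fromBlocks]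
  simp only [Matrix.one_mul, Matrix.zero_mul, add_zero, zero_add]
  rw [fromCols_mul_fromRows, Matrix.mul_add]
  simp only [Matrix.neg_mul, Matrix.mul_neg, neg_neg, ← Matrix.mul_assoc]
  rw [← hSc]
  simp only [mul_invOf_self, Matrix.one_mul]
  simp only [srtrV, invOf_eq_nonsing_inv, mapF_add, mapF_mul, Matrix.mul_add, Matrix.add_mul,
    Matrix.neg_mul, Matrix.mul_neg, neg_neg, ← Matrix.mul_assoc]

/-- for every `K`, with `D` the diagonal of `W`, the pencil `λ I_p - D` is
invertible, `Φ := (λ I_p - D)⁻¹ (W - D)` has zero diagonal, `I_p - Φ` is invertible, and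
`(I_p - Φ) G = Γ` where `Γ := (λ I_p - D)⁻¹ V`; i.e. `(Φ, Γ)` is an NRF pair of `G`. -/
theorem stmt_3 (p r m : ℕ) (hp : 0 < p) (hr : 0 < r) (hm : 0 < m)
    (A11 : Matrix (Fin p) (Fin p) ℝ) (A12 : Matrix (Fin p) (Fin r) ℝ)
    (A21 : Matrix (Fin r) (Fin p) ℝ) (A22 : Matrix (Fin r) (Fin r) ℝ)
    (B1 : Matrix (Fin p) (Fin m) ℝ) (B2 : Matrix (Fin r) (Fin m) ℝ) :
    ∀ K : Matrix (Fin r) (Fin p) ℝ,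
      let W := srtrW A11 A12 A21 A22 K
      let V := srtrV A12 A22 B1 B2 K
      let D : Matrix (Fin p) (Fin p) FF := Matrix.diagonal (fun i => W i i)
      let Φ : Matrix (Fin p) (Fin p) FF :=
        (lam • (1 : Matrix (Fin p) (Fin p) FF) - D)⁻¹ * (W - D)
      let Γ : Matrix (Fin p) (Fin m) FF :=
        (lam • (1 : Matrix (Fin p) (Fin p) FF) - D)⁻¹ * V
      IsUnit (lam • (1 : Matrix (Fin p) (Fin p) FF) - D) ∧
      (∀ i : Fin p, Φ i i = 0) ∧
      IsUnit ((1 : Matrix (Fin p) (Fin p) FF) - Φ) ∧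
      ((1 : Matrix (Fin p) (Fin p) FF) - Φ) * plantG A11 A12 A21 A22 B1 B2 = Γ := by
  intro K
  dsimp only
  set W := srtrW A11 A12 A21 A22 K with hW
  set D : Matrix (Fin p) (Fin p) FF := Matrix.diagonal (fun i => W i i) with hD
  have hdiag : lam • (1 : Matrix (Fin p) (Fin p) FF) - D =
      Matrix.diagonal (fun i => lam - W i i) := by
    rw [hD, Matrix.smul_one_eq_diagonal, ← Matrix.diagonal_sub]
  have hDdet : IsUnit (lam • (1 : Matrix (Fin p) (Fin p) FF) - D).det := by
    rw [hdiag, Matrix.det_diagonal]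
    exact isUnit_iff_ne_zero.mpr (Finset.prod_ne_zero_iff.mpr
      (fun i _ => lam_sub_W_ne_zero A11 A12 A21 A22 K i))
  have hDunit : IsUnit (lam • (1 : Matrix (Fin p) (Fin p) FF) - D) :=
    (Matrix.isUnit_iff_isUnit_det _).mpr hDdet
  have hDinv_unit : IsUnit (lam • (1 : Matrix (Fin p) (Fin p) FF) - D)⁻¹ :=
    Matrix.isUnit_nonsing_inv_iff.mpr hDunit
  have hWunit : IsUnit (lam • (1 : Matrix (Fin p) (Fin p) FF) - W) :=
    isUnit_lam_one_sub_W A11 A12 A21 A22 K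
  have h1Φ : (1 : Matrix (Fin p) (Fin p) FF) -
      (lam • (1 : Matrix (Fin p) (Fin p) FF) - D)⁻¹ * (W - D) =
      (lam • (1 : Matrix (Fin p) (Fin p) FF) - D)⁻¹ *
        (lam • (1 : Matrix (Fin p) (Fin p) FF) - W) := by
    have e : lam • (1 : Matrix (Fin p) (Fin p) FF) - W =
        (lam • (1 : Matrix (Fin p) (Fin p) FF) - D) - (W - D) := by abel
    rw [e, Matrix.mul_sub ((lam • (1 : Matrix (Fin p) (Fin p) FF) - D)⁻¹)
      (lam • (1 : Matrix (Fin p) (Fin p) FF) - D) (W - D), Matrix.nonsing_inv_mul _ hDdet]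
  refine ⟨hDunit, ?_, ?_, ?_⟩
  · intro i
    rw [hdiag, Matrix.inv_diagonal]
    simp [Matrix.diagonal_mul, hD]
  · rw [h1Φ]
    exact hDinv_unit.mul hWunit
  · rw [h1Φ, Matrix.mul_assoc, key_identity]
end
end

section
/- Assume (A, B) is controllable. Then for every K ∈ ℝ^{(n−p)×p} and every μ ∈ ℂ, the complex (n+p)×(n+p+m) system matrix S(μ) := [[(A22 + K·A12) − μI_{n−p}, 0, K·A12·K + A22·K − K·A11 − A21, K·B1 + B2],[0, I_p, −μI_p, 0],[A12, I_p, −A11 + A12·K, B1]] (real blocks complexified) has full row rank n+p. -/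
open Matrix Polynomial

set_option synthInstance.maxHeartbeats 1000000
set_option maxHeartbeats 1000000

noncomputable section

private lemma mapC_add {k l : Type} (M N : Matrix k l ℝ) :
    mapC (M + N) = mapC M + mapC N := by
  ext i j; simp [mapC]

private lemma mapC_sub {k l : Type} (M N : Matrix k l ℝ) :
    mapC (M - N) = mapC M - mapC N := by
  ext i j; simp [mapC]

private lemma mapC_neg {k l : Type} (M : Matrix k l ℝ) :
    mapC (-M) = -mapC M := by
  ext i j; simp [mapC]

private lemma mapC_mul {k l o : Type} [Fintype l] (M : Matrix k l ℝ) (N : Matrix l o ℝ) :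
    mapC (M * N) = mapC M * mapC N := by
  simp only [mapC, Matrix.map_mul]

/-- under controllability, for every `K` and every `μ : ℂ` the complexified
system matrix `S(μ)` of the Rosenbrock-type realization of `[λ I_p - W, V]` has full row
rank `n + p = r + p + p`. -/
theorem stmt_6 (p r m : ℕ) (hp : 0 < p) (hr : 0 < r) (hm : 0 < m)
    (A11 : Matrix (Fin p) (Fin p) ℝ) (A12 : Matrix (Fin p) (Fin r) ℝ)
    (A21 : Matrix (Fin r) (Fin p) ℝ) (A22 : Matrix (Fin r) (Fin r) ℝ)
    (B1 : Matrix (Fin p) (Fin m) ℝ) (B2 : Matrix (Fin r) (Fin m) ℝ)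
    (hctrb : CtrbPair (fromBlocks A11 A12 A21 A22) (fromRows B1 B2)) :
    ∀ (K : Matrix (Fin r) (Fin p) ℝ) (μ : ℂ),
      (fromBlocks
        (fromBlocks (mapC (A22 + K * A12) - μ • (1 : Matrix (Fin r) (Fin r) ℂ))
          (0 : Matrix (Fin r) (Fin p) ℂ) (0 : Matrix (Fin p) (Fin r) ℂ)
          (1 : Matrix (Fin p) (Fin p) ℂ))
        (fromBlocks (mapC (K * A12 * K + A22 * K - K * A11 - A21)) (mapC (K * B1 + B2))
          (-(μ • (1 : Matrix (Fin p) (Fin p) ℂ))) (0 : Matrix (Fin p) (Fin m) ℂ))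
        (fromCols (mapC A12) (1 : Matrix (Fin p) (Fin p) ℂ))
        (fromCols (mapC (-A11 + A12 * K)) (mapC B1))).rank = r + p + p := by
  intro K μ
  classical
  have hC := hctrb μ
  have hsurj : Function.Surjective
      (fromCols (mapC (fromBlocks A11 A12 A21 A22)
        - μ • (1 : Matrix (Fin p ⊕ Fin r) (Fin p ⊕ Fin r) ℂ))
        (mapC (fromRows B1 B2))).mulVecLin := by
    rw [← LinearMap.range_eq_top]
    apply Submodule.eq_top_of_finrank_eq
    rw [Module.finrank_fintype_fun_eq_card]
    simpa [Matrix.rank, Fintype.card_sum] using hC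
  have hblkA : mapC (fromBlocks A11 A12 A21 A22)
      - μ • (1 : Matrix (Fin p ⊕ Fin r) (Fin p ⊕ Fin r) ℂ)
      = fromBlocks (mapC A11 - μ • 1) (mapC A12) (mapC A21) (mapC A22 - μ • 1) := by
    ext (i | i) (j | j) <;>
      simp [mapC, Matrix.one_apply, Matrix.sub_apply, Matrix.smul_apply]
  have hblkB : mapC (fromRows B1 B2) = fromRows (mapC B1) (mapC B2) := by
    ext (i | i) j <;> simp [mapC]
  -- main surjectivity
  have hSsurj : Function.Surjective
      (fromBlocks
        (fromBlocks (mapC (A22 + K * A12) - μ • (1 : Matrix (Fin r) (Fin r) ℂ))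
          (0 : Matrix (Fin r) (Fin p) ℂ) (0 : Matrix (Fin p) (Fin r) ℂ)
          (1 : Matrix (Fin p) (Fin p) ℂ))
        (fromBlocks (mapC (K * A12 * K + A22 * K - K * A11 - A21)) (mapC (K * B1 + B2))
          (-(μ • (1 : Matrix (Fin p) (Fin p) ℂ))) (0 : Matrix (Fin p) (Fin m) ℂ))
        (fromCols (mapC A12) (1 : Matrix (Fin p) (Fin p) ℂ))
        (fromCols (mapC (-A11 + A12 * K)) (mapC B1))).mulVecLin := by
    intro y
    set d : Fin p → ℂ := fun i => y (Sum.inr i) - y (Sum.inl (Sum.inr i)) with hd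
    obtain ⟨x, hx⟩ := hsurj (Sum.elim d
      (fun j => y (Sum.inl (Sum.inl j)) - (mapC K *ᵥ d) j))
    set a : Fin p → ℂ := fun i => x (Sum.inl (Sum.inl i)) with ha
    set b : Fin r → ℂ := fun i => x (Sum.inl (Sum.inr i)) with hb
    set z : Fin m → ℂ := fun i => x (Sum.inr i) with hz
    have hxeq : x = Sum.elim (Sum.elim a b) z := by
      funext i; rcases i with (i | i) | i <;> rfl
    rw [Matrix.mulVecLin_apply, hxeq, hblkA, hblkB,
      Matrix.fromCols_mulVec_sumElim, Matrix.fromBlocks_mulVec,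
      Matrix.fromRows_mulVec] at hx
    have hP : (mapC A11 - μ • 1) *ᵥ a + mapC A12 *ᵥ b + mapC B1 *ᵥ z = d := by
      funext i
      have := congrFun hx (Sum.inl i)
      simpa using this
    have hR : mapC A21 *ᵥ a + (mapC A22 - μ • 1) *ᵥ b + mapC B2 *ᵥ z
        = (fun j => y (Sum.inl (Sum.inl j)) - (mapC K *ᵥ d) j) := by
      funext j
      have := congrFun hx (Sum.inr j)
      simpa using this
    have hKP := congrArg (fun v => mapC K *ᵥ v) hP
    simp only [Matrix.mulVec_add, Matrix.mulVec_sub, Matrix.sub_mulVec,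
      Matrix.smul_mulVec, Matrix.one_mulVec, Matrix.mulVec_smul,
      Matrix.mulVec_mulVec] at hKP hP hR
    refine ⟨Sum.elim (Sum.elim (b + mapC K *ᵥ a)
      (fun i => y (Sum.inl (Sum.inr i)) - μ * a i)) (Sum.elim (-a) z), ?_⟩
    rw [Matrix.mulVecLin_apply, Matrix.fromBlocks_mulVec]
    funext i
    rcases i with (j | j) | j
    · -- first row block (Fin r)
      have h1 := congrFun hR j
      have h2 := congrFun hKP j
      simp only [mapC_add, mapC_sub, mapC_mul, mapC_neg, Sum.elim_inl,
        Sum.elim_comp_inl, Sum.elim_comp_inr,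
        Matrix.fromBlocks_mulVec, Matrix.fromCols_mulVec_sumElim,
        Matrix.add_mulVec, Matrix.sub_mulVec, Matrix.neg_mulVec,
        Matrix.smul_mulVec, Matrix.one_mulVec, Matrix.zero_mulVec,
        Matrix.mulVec_add, Matrix.mulVec_sub, Matrix.mulVec_neg,
        ← Matrix.mulVec_mulVec, Pi.add_apply, Pi.sub_apply, Pi.neg_apply,
        Pi.smul_apply, Pi.zero_apply, smul_eq_mul] at h1 h2 ⊢
      linear_combination h1 + h2
    · -- second row block (Fin p): the identity row
      simp only [Sum.elim_inl, Sum.elim_inr, Sum.elim_comp_inl, Sum.elim_comp_inr,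
        Matrix.fromBlocks_mulVec,
        Matrix.fromCols_mulVec_sumElim, Matrix.zero_mulVec, Matrix.neg_mulVec,
        Matrix.smul_mulVec, Matrix.one_mulVec, Matrix.mulVec_neg,
        Pi.add_apply, Pi.sub_apply, Pi.neg_apply, Pi.smul_apply, Pi.zero_apply,
        smul_eq_mul]
      ring
    · -- third row block (Fin p)
      have h3 := congrFun hP j
      simp only [hd] at h3
      simp only [mapC_add, mapC_sub, mapC_mul, mapC_neg, Sum.elim_inr,
        Sum.elim_comp_inl, Sum.elim_comp_inr,
        Matrix.fromCols_mulVec_sumElim,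
        Matrix.add_mulVec, Matrix.sub_mulVec, Matrix.neg_mulVec,
        Matrix.smul_mulVec, Matrix.one_mulVec, Matrix.zero_mulVec,
        Matrix.mulVec_add, Matrix.mulVec_sub, Matrix.mulVec_neg,
        ← Matrix.mulVec_mulVec, Pi.add_apply, Pi.sub_apply, Pi.neg_apply,
        Pi.smul_apply, Pi.zero_apply, smul_eq_mul] at h3 ⊢
      linear_combination h3
  rw [Matrix.rank, LinearMap.range_eq_top.mpr hSsurj, finrank_top,
    Module.finrank_fintype_fun_eq_card]
  simp [Fintype.card_sum]
end
end
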